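/- arXiv:math/0610378 — 2 statements merged into one kernel-verified Lean document; each statement's English description precedes it below -/
import Mathlib

section
/- The function u : ℝ² → ℂ defined by u(x,η) = (1 + ∂_η)[(1−iη)² γ₂(−x) γ₂(−η) e^{ixη}], where γ₂(t) = t·e^{-t} for t ≥ 0 and 0 otherwise, belongs to L²(ℝ²) ∩ L¹(ℝ²). -/
open MeasureTheory

private lemma fb_integrable : Integrable (fun t : ℝ => if t ≤ 0 then Real.exp (t/2) else 0) := by
  have h1 : Integrable (Set.indicator (Set.Iic (0:ℝ)) Real.exp) :=
    (integrableOn_exp_Iic 0).integrable_indicator measurableSet_Iic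
  have h2 := h1.comp_div (R := 2) two_ne_zero
  convert h2 using 1
  funext t
  simp only [Set.indicator, Set.mem_Iic]
  by_cases ht : t ≤ 0
  · rw [if_pos ht, if_pos (by linarith)]
  · rw [if_neg ht, if_neg (by intro h; exact ht (by linarith))]

private lemma fb_sq_integrable :
    Integrable (fun t : ℝ => (if t ≤ 0 then Real.exp (t/2) else 0)^2) := by
  have h1 : Integrable (Set.indicator (Set.Iic (0:ℝ)) Real.exp) :=
    (integrableOn_exp_Iic 0).integrable_indicator measurableSet_Iic
  convert h1 using 1
  funext t
  simp only [Set.indicator, Set.mem_Iic]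
  by_cases ht : t ≤ 0
  · rw [if_pos ht, if_pos ht, sq, ← Real.exp_add]
    congr 1; ring
  · rw [if_neg ht, if_neg ht]; ring

private lemma poly_bound1 {x : ℝ} (hx : x ≤ 0) :
    |x| * (4 + |x|) * Real.exp x ≤ 16 * Real.exp (x/2) := by
  rw [abs_of_nonpos hx]
  have hx0 : (0:ℝ) ≤ -x := by linarith
  have h1 : 1 + (-x)/4 ≤ Real.exp ((-x)/4) := by
    have := Real.add_one_le_exp ((-x)/4); linarith
  have key : (-x)*(4+(-x)) ≤ 16*(Real.exp ((-x)/4)*Real.exp ((-x)/4)) := by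
    nlinarith [Real.exp_pos ((-x)/4), sq_nonneg (Real.exp ((-x)/4) - (1 + (-x)/4))]
  have hee : Real.exp ((-x)/4)*Real.exp ((-x)/4) = Real.exp ((-x)/2) := by
    rw [← Real.exp_add]; congr 1; ring
  have h3 : Real.exp ((-x)/2) * Real.exp x = Real.exp (x/2) := by
    rw [← Real.exp_add]; congr 1; ring
  rw [hee] at key
  calc (-x)*(4+(-x))*Real.exp x ≤ 16*Real.exp ((-x)/2)*Real.exp x :=
        mul_le_mul_of_nonneg_right key (Real.exp_pos _).le
    _ = 16*Real.exp (x/2) := by rw [mul_assoc, h3]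

private lemma poly_bound2 {t : ℝ} (ht : t ≤ 0) :
    (1 + |t|)^3 * Real.exp t ≤ 216 * Real.exp (t/2) := by
  rw [abs_of_nonpos ht]
  have ht0 : (0:ℝ) ≤ -t := by linarith
  have h1 : 1 + (-t)/6 ≤ Real.exp ((-t)/6) := by
    have := Real.add_one_le_exp ((-t)/6); linarith
  have key : (1+(-t))^3 ≤ 216 * (Real.exp ((-t)/6))^3 := by
    calc (1+(-t))^3 ≤ (6*Real.exp ((-t)/6))^3 :=
          pow_le_pow_left₀ (by linarith) (by linarith) 3
      _ = 216 * (Real.exp ((-t)/6))^3 := by ring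
  have he3 : (Real.exp ((-t)/6))^3 = Real.exp ((-t)/2) := by
    rw [← Real.exp_nat_mul]; congr 1; push_cast; ring
  have h3 : Real.exp ((-t)/2) * Real.exp t = Real.exp (t/2) := by
    rw [← Real.exp_add]; congr 1; ring
  rw [he3] at key
  calc (1+(-t))^3 * Real.exp t ≤ 216*Real.exp ((-t)/2)*Real.exp t :=
        mul_le_mul_of_nonneg_right key (Real.exp_pos _).le
    _ = 216*Real.exp (t/2) := by rw [mul_assoc, h3]

private lemma hasDerivAt_E (x : ℝ) (z : ℂ) :
    HasDerivAt (fun w : ℂ => ((x:ℂ) * Real.exp x) *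
        ((1 - Complex.I*w)^2 * (w * Complex.exp ((1 + Complex.I*x)*w))))
      (((x:ℂ) * Real.exp x) * Complex.exp ((1 + Complex.I*x)*z) *
        ((2*(1 - Complex.I*z)*(-Complex.I))*z
          + (1 - Complex.I*z)^2 * (1 + z*(1 + Complex.I*x)))) z := by
  have h1 : HasDerivAt (fun w : ℂ => 1 - Complex.I*w) (-(Complex.I*1)) z :=
    ((hasDerivAt_id z).const_mul Complex.I).const_sub 1
  have h2 := h1.pow 2
  have h3 : HasDerivAt (fun w : ℂ => (1+Complex.I*(x:ℂ))*w) ((1+Complex.I*(x:ℂ))*1) z :=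
    (hasDerivAt_id z).const_mul _
  have h4 := h3.cexp
  have h5 := (hasDerivAt_id z).mul h4
  have h6 := h2.mul h5
  have h7 := h6.const_mul ((x:ℂ) * Real.exp x)
  simp only [id_eq] at h7
  refine h7.congr_deriv ?_
  simp only [Pi.mul_apply, Pi.pow_apply, id_eq, Nat.add_one_sub_one, pow_one, Nat.cast_ofNat]
  ring

/-- The function u(x,η) = (1+∂_η)[(1−iη)²γ₂(−x)γ₂(−η)e^{ixη}] belongs to L²(ℝ²) ∩ L¹(ℝ²). -/
theorem u_memL2_and_L1
    (γ₂ : ℝ → ℝ) (hγ₂ : ∀ t, γ₂ t = if 0 ≤ t then t * Real.exp (-t) else 0)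
    (g : ℝ → ℝ → ℂ)
    (hg : ∀ x η, g x η =
      (1 - Complex.I * (η : ℂ)) ^ 2 * (γ₂ (-x) : ℂ) * (γ₂ (-η) : ℂ) *
        Complex.exp (Complex.I * (x : ℂ) * (η : ℂ)))
    (u : ℝ × ℝ → ℂ)
    (hu : ∀ p : ℝ × ℝ, u p = g p.1 p.2 + deriv (g p.1) p.2) :
    MemLp u 2 (volume : Measure (ℝ × ℝ)) ∧ Integrable u (volume : Measure (ℝ × ℝ)) := by
  set fb : ℝ → ℝ := fun t => if t ≤ 0 then Real.exp (t/2) else 0 with hfbdef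
  have fb_nonneg : ∀ t, 0 ≤ fb t := by
    intro t; simp only [hfbdef]; split
    · positivity
    · exact le_refl 0
  set W : ℝ × ℝ → ℂ := fun p =>
    ((p.1:ℂ) * Real.exp p.1) * Complex.exp ((1 + Complex.I*p.1) * p.2) *
      ((1 - Complex.I*p.2)^2 * p.2 + ((2*(1 - Complex.I*p.2)*(-Complex.I))*p.2
        + (1 - Complex.I*p.2)^2 * (1 + p.2*(1 + Complex.I*p.1)))) with hWdef
  set v : ℝ × ℝ → ℂ := fun p => if p.1 < 0 ∧ p.2 < 0 then W p else 0 with hvdef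
  have hWcont : Continuous W := by fun_prop
  have hs : MeasurableSet {p : ℝ × ℝ | p.1 < 0 ∧ p.2 < 0} := by
    have : {p : ℝ × ℝ | p.1 < 0 ∧ p.2 < 0} = Set.Iio 0 ×ˢ Set.Iio 0 := by
      ext p; simp [Set.mem_prod]
    rw [this]; exact measurableSet_Iio.prod measurableSet_Iio
  have hvmeas : AEStronglyMeasurable v (volume : Measure (ℝ × ℝ)) :=
    (Measurable.ite hs hWcont.measurable measurable_const).aestronglyMeasurable
  -- pointwise bound
  have hbound : ∀ p : ℝ × ℝ, ‖v p‖ ≤ 3456 * (fb p.1 * fb p.2) := by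
    intro ⟨x, η⟩
    by_cases h : x < 0 ∧ η < 0
    · obtain ⟨hx, hη⟩ := h
      simp only [hvdef, if_pos (⟨hx, hη⟩ : x < 0 ∧ η < 0)]
      have hb1 : ‖(1:ℂ) - Complex.I*(η:ℂ)‖ ≤ 1 + |η| := by
        calc ‖(1:ℂ) - Complex.I*(η:ℂ)‖ ≤ ‖(1:ℂ)‖ + ‖Complex.I*(η:ℂ)‖ := norm_sub_le _ _
          _ = 1 + |η| := by simp
      have hb2 : ‖(1:ℂ) + (η:ℂ)*(1+Complex.I*(x:ℂ))‖ ≤ 1 + |η| *(1+|x|) := by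
        have h21 : ‖(1:ℂ)+Complex.I*(x:ℂ)‖ ≤ 1 + |x| := by
          calc ‖(1:ℂ) + Complex.I*(x:ℂ)‖ ≤ ‖(1:ℂ)‖ + ‖Complex.I*(x:ℂ)‖ := norm_add_le _ _
            _ = 1 + |x| := by simp
        calc ‖(1:ℂ) + (η:ℂ)*(1+Complex.I*(x:ℂ))‖
            ≤ ‖(1:ℂ)‖ + ‖(η:ℂ)*(1+Complex.I*(x:ℂ))‖ := norm_add_le _ _
          _ = 1 + |η| * ‖(1:ℂ)+Complex.I*(x:ℂ)‖ := by rw [norm_mul]; simp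
          _ ≤ 1 + |η| *(1+|x|) := by
              have := mul_le_mul_of_nonneg_left h21 (abs_nonneg η)
              linarith
      have hT : ‖(1 - Complex.I*(η:ℂ))^2 * η + ((2*(1 - Complex.I*(η:ℂ))*(-Complex.I))*η
          + (1 - Complex.I*(η:ℂ))^2 * (1 + η*(1 + Complex.I*(x:ℂ))))‖
          ≤ (1+|η|)^3 * (4+|x|) := by
        have step : ‖(1 - Complex.I*(η:ℂ))^2 * η + ((2*(1 - Complex.I*(η:ℂ))*(-Complex.I))*η
            + (1 - Complex.I*(η:ℂ))^2 * (1 + η*(1 + Complex.I*(x:ℂ))))‖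
            ≤ ‖(1 - Complex.I*(η:ℂ))‖^2 * |η| + (2*‖(1 - Complex.I*(η:ℂ))‖*|η|
              + ‖(1 - Complex.I*(η:ℂ))‖^2 * ‖(1:ℂ) + (η:ℂ)*(1+Complex.I*(x:ℂ))‖) := by
          calc _ ≤ ‖(1 - Complex.I*(η:ℂ))^2 * (η:ℂ)‖
                + (‖(2*(1 - Complex.I*(η:ℂ))*(-Complex.I))*(η:ℂ)‖
                  + ‖(1 - Complex.I*(η:ℂ))^2 * (1 + (η:ℂ)*(1 + Complex.I*(x:ℂ)))‖) :=
              (norm_add_le _ _).trans (add_le_add_right (norm_add_le _ _) _)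
            _ = ‖(1 - Complex.I*(η:ℂ))‖^2 * |η| + (2*‖(1 - Complex.I*(η:ℂ))‖*|η|
              + ‖(1 - Complex.I*(η:ℂ))‖^2 * ‖(1:ℂ) + (η:ℂ)*(1+Complex.I*(x:ℂ))‖) := by
              simp only [norm_mul, norm_pow, Complex.norm_real, Complex.norm_I, norm_neg,
                Real.norm_eq_abs, Complex.norm_ofNat, norm_one] <;> ring
        have step2 : ‖(1 - Complex.I*(η:ℂ))‖^2 * |η| + (2*‖(1 - Complex.I*(η:ℂ))‖*|η|
              + ‖(1 - Complex.I*(η:ℂ))‖^2 * ‖(1:ℂ) + (η:ℂ)*(1+Complex.I*(x:ℂ))‖)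
            ≤ (1+|η|)^2 * |η| + (2*(1+|η|)*|η| + (1+|η|)^2 * (1 + |η| *(1+|x|))) := by
          gcongr <;> first | exact norm_nonneg _ | exact abs_nonneg _ | positivity
        refine step.trans (step2.trans ?_)
        nlinarith [abs_nonneg η, abs_nonneg x, sq_nonneg (1+|η|),
          mul_nonneg (abs_nonneg η) (abs_nonneg x)]
      have hnc : ‖((x:ℂ) * (Real.exp x : ℂ))‖ = |x| * Real.exp x := by
        rw [norm_mul]; simp [Real.abs_exp]
      have hne : ‖Complex.exp ((1 + Complex.I*(x:ℂ)) * (η:ℂ))‖ = Real.exp η := by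
        rw [Complex.norm_exp]
        congr 1
        simp [Complex.add_re, Complex.mul_re]
      calc ‖W (x, η)‖
          = (|x| * Real.exp x) * Real.exp η *
            ‖(1 - Complex.I*(η:ℂ))^2 * η + ((2*(1 - Complex.I*(η:ℂ))*(-Complex.I))*η
              + (1 - Complex.I*(η:ℂ))^2 * (1 + η*(1 + Complex.I*(x:ℂ))))‖ := by
            simp only [hWdef, norm_mul, hnc, hne]
        _ ≤ (|x| * Real.exp x) * Real.exp η * ((1+|η|)^3 * (4+|x|)) := by
            apply mul_le_mul_of_nonneg_left hT
            positivity
        _ = (|x| * (4+|x|) * Real.exp x) * ((1+|η|)^3 * Real.exp η) := by ring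
        _ ≤ (16 * Real.exp (x/2)) * (216 * Real.exp (η/2)) := by
            apply mul_le_mul (poly_bound1 hx.le) (poly_bound2 hη.le) (by positivity) (by positivity)
        _ = 3456 * (fb x * fb η) := by
            simp only [hfbdef, if_pos hx.le, if_pos hη.le]; ring
    · simp only [hvdef, if_neg h, norm_zero]
      have := fb_nonneg x; have := fb_nonneg η
      positivity
  have hFint : Integrable (fun p : ℝ × ℝ => 3456 * (fb p.1 * fb p.2))
      (volume : Measure (ℝ × ℝ)) := by
    have := (fb_integrable.mul_prod fb_integrable)
    rw [← Measure.volume_eq_prod] at this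
    exact this.const_mul 3456
  have hvint : Integrable v (volume : Measure (ℝ × ℝ)) :=
    Integrable.mono' hFint hvmeas (Filter.Eventually.of_forall hbound)
  have hv2 : MemLp v 2 (volume : Measure (ℝ × ℝ)) := by
    rw [memLp_two_iff_integrable_sq_norm hvmeas]
    have hF2 : Integrable (fun p : ℝ × ℝ => 3456^2 * ((fb p.1)^2 * (fb p.2)^2))
        (volume : Measure (ℝ × ℝ)) := by
      have := (fb_sq_integrable.mul_prod fb_sq_integrable)
      rw [← Measure.volume_eq_prod] at this
      exact this.const_mul _
    apply Integrable.mono' hF2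
    · exact (continuous_pow 2).comp_aestronglyMeasurable hvmeas.norm
    · refine Filter.Eventually.of_forall fun p => ?_
      have h1 := hbound p
      have h2 : ‖‖v p‖^2‖ = ‖v p‖^2 := by
        rw [Real.norm_eq_abs, abs_of_nonneg (by positivity)]
      rw [h2]
      calc ‖v p‖^2 ≤ (3456 * (fb p.1 * fb p.2))^2 :=
            pow_le_pow_left₀ (norm_nonneg _) h1 2
        _ = 3456^2 * ((fb p.1)^2 * (fb p.2)^2) := by ring
  -- a.e. equality of u and v
  have hnull : (volume : Measure (ℝ × ℝ)) {p : ℝ × ℝ | p.2 = 0} = 0 := by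
    have hset : {p : ℝ × ℝ | p.2 = 0} = (Set.univ : Set ℝ) ×ˢ ({0} : Set ℝ) := by
      ext ⟨a, b⟩; simp [eq_comm]
    rw [hset, Measure.volume_eq_prod, Measure.prod_prod]
    simp
  have hae : u =ᵐ[(volume : Measure (ℝ × ℝ))] v := by
    refine MeasureTheory.ae_iff.mpr (measure_mono_null ?_ hnull)
    intro p hp
    simp only [Set.mem_setOf_eq] at hp ⊢
    by_contra hη0
    apply hp
    obtain ⟨x, η⟩ := p
    simp only at hη0 ⊢
    by_cases hx : x < 0
    · by_cases hη : η < 0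
      · -- main case
        set A : ℂ := 1 + Complex.I*(x:ℂ) with hA
        set c : ℂ := (x:ℂ) * Real.exp x with hc
        have hEeq : ∀ t ∈ Set.Iio (0:ℝ),
            g x t = c * ((1 - Complex.I*(t:ℂ))^2 * ((t:ℂ) * Complex.exp (A*(t:ℂ)))) := by
          intro t ht
          simp only [Set.mem_Iio] at ht
          rw [hg, hγ₂, hγ₂, if_pos (by linarith : (0:ℝ) ≤ -x), if_pos (by linarith : (0:ℝ) ≤ -t)]
          have hexp : Complex.exp (A*(t:ℂ)) = (Real.exp t : ℂ) * Complex.exp (Complex.I*(x:ℂ)*(t:ℂ)) := by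
            rw [show A*(t:ℂ) = (t:ℂ) + Complex.I*(x:ℂ)*(t:ℂ) by rw [hA]; ring,
              Complex.exp_add, Complex.ofReal_exp]
          rw [hexp, hc]
          push_cast
          rw [neg_neg, neg_neg]
          ring
        have hderiv : deriv (g x) η =
            c * Complex.exp (A*(η:ℂ)) *
              ((2*(1 - Complex.I*(η:ℂ))*(-Complex.I))*(η:ℂ)
                + (1 - Complex.I*(η:ℂ))^2 * (1 + (η:ℂ)*A)) := by
          have hev : g x =ᶠ[nhds η]
              fun t : ℝ => c * ((1 - Complex.I*(t:ℂ))^2 * ((t:ℂ) * Complex.exp (A*(t:ℂ)))) := by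
            filter_upwards [Iio_mem_nhds hη] with t ht using hEeq t ht
          rw [hev.deriv_eq]
          exact ((hasDerivAt_E x (η:ℂ)).comp_ofReal).deriv
        rw [hu, hvdef]
        simp only [if_pos (⟨hx, hη⟩ : x < 0 ∧ η < 0)]
        show g x η + deriv (g x) η = W (x, η)
        rw [hderiv, hEeq η hη, hWdef]
        simp only [hA, hc]
        ring
      · -- x < 0, η > 0
        have hη' : 0 < η := lt_of_le_of_ne (not_lt.1 hη) (Ne.symm hη0)
        have hg0 : ∀ t ∈ Set.Ioi (0:ℝ), g x t = 0 := by
          intro t ht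
          simp only [Set.mem_Ioi] at ht
          rw [hg, hγ₂ (-t), if_neg (by linarith)]
          simp
        have hev : g x =ᶠ[nhds η] fun _ => (0:ℂ) := by
          filter_upwards [Ioi_mem_nhds hη'] with t ht using hg0 t ht
        rw [hu]
        show g x η + deriv (g x) η = v (x, η)
        rw [hev.deriv_eq, deriv_const, hg0 η hη', hvdef]
        simp only [if_neg (fun hcon : x < 0 ∧ η < 0 => absurd hcon.2 hη)]
        simp
    · -- 0 ≤ x
      have hγx : γ₂ (-x) = 0 := by
        rw [hγ₂]
        by_cases h0 : (0:ℝ) ≤ -x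
        · rw [if_pos h0]
          have hx0 : x = 0 := by
            have := not_lt.1 hx; linarith
          rw [hx0]; simp
        · rw [if_neg h0]
      have hgx : g x = fun _ => (0:ℂ) := by
        funext t
        rw [hg, hγx]
        simp
      rw [hu]
      show g x η + deriv (g x) η = v (x, η)
      rw [hgx, deriv_const, hvdef]
      simp only [if_neg (fun hcon : x < 0 ∧ η < 0 => absurd hcon.1 hx)]
      simp
  exact ⟨hv2.ae_eq hae.symm, hvint.congr hae.symm⟩
end

section
/- Let Ω be a compact Hausdorff space, C = C(Ω), E a Hilbert C-module, and suppose for each λ ∈ Ω there is a Hilbert space H_λ and a linear map V_λ : E → H_λ satisfying ⟨V_λ f, V_λ g⟩_{H_λ} = ⟨f,g⟩(λ) for all f,g ∈ E. If T : E → E is adjointable and for each λ there is a bounded operator T_λ on H_λ with V_λ ∘ T = T_λ ∘ V_λ on E, then ‖T‖ = sup_{λ∈Ω} ‖T_λ‖ (where T_λ is restricted to the closure of the range of V_λ). -/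
open scoped ComplexOrder

private lemma aux_le_of_sq_le_sq {a b : ℝ} (hb : 0 ≤ b) (h : a ^ 2 ≤ b ^ 2)
    (ha : 0 ≤ a) : a ≤ b := by
  nlinarith

private lemma aux_le_of_pow_le {x a M : ℝ} (hx : 0 ≤ x) (ha : 0 ≤ a)
    (h : ∀ k : ℕ, x ^ (2 ^ k) ≤ M * a ^ (2 ^ k)) : x ≤ a := by
  by_contra hcon
  push_neg at hcon
  rcases eq_or_lt_of_le ha with ha0 | ha0
  · have h0 := h 0
    simp only [pow_zero, pow_one, ← ha0, mul_zero] at h0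
    exact absurd hcon (not_lt.2 (h0.trans (le_of_eq ha0)))
  · set r : ℝ := x / a with hr
    have hr1 : 1 < r := (one_lt_div ha0).2 hcon
    have hkey : ∀ k : ℕ, r ^ (2 ^ k) ≤ M := by
      intro k
      have hpow : (0:ℝ) < a ^ (2 ^ k) := pow_pos ha0 _
      rw [hr, div_pow, div_le_iff₀ hpow]
      exact h k
    obtain ⟨k, hk⟩ := pow_unbounded_of_one_lt M hr1
    have h1 : r ^ k ≤ r ^ (2 ^ k) :=
      pow_le_pow_right₀ hr1.le (Nat.lt_two_pow_self (n := k)).le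
    exact absurd ((hk.trans_le h1).trans_le (hkey k)) (lt_irrefl M)

/-- Localization of the norm of an adjointable operator on a Hilbert C(Ω)-module:
if V_λ : E → H_λ satisfy ⟨V_λ f, V_λ g⟩ = ⟨f,g⟩(λ) and V_λ ∘ T = T_λ ∘ V_λ, then
‖T‖ is the supremum over λ of the norm of T_λ restricted to the closure of the
range of V_λ. -/
theorem norm_eq_sup_of_localization
    {Ω : Type*} [TopologicalSpace Ω] [CompactSpace Ω] [T2Space Ω]
    {E : Type*} [NormedAddCommGroup E] [NormedSpace ℂ E]
    (ip : E → E → C(Ω, ℂ))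
    (h_add : ∀ f g h : E, ip f (g + h) = ip f g + ip f h)
    (h_smul : ∀ (c : ℂ) (f g : E), ip f (c • g) = c • ip f g)
    (h_star : ∀ f g : E, ip g f = star (ip f g))
    (h_pos : ∀ (f : E) (lam : Ω), 0 ≤ ip f f lam)
    (hnorm : ∀ f : E, ‖f‖ = Real.sqrt ‖ip f f‖)
    (H : Ω → Type*) [∀ lam, NormedAddCommGroup (H lam)]
    [∀ lam, InnerProductSpace ℂ (H lam)]
    (V : ∀ lam, E →ₗ[ℂ] H lam)
    (hV : ∀ (lam : Ω) (f g : E), (inner ℂ (V lam f) (V lam g) : ℂ) = ip f g lam)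
    (T : E →L[ℂ] E) (T' : E →L[ℂ] E)
    (h_adj : ∀ f g : E, ip (T f) g = ip f (T' g))
    (Tl : ∀ lam, H lam →L[ℂ] H lam)
    (hTl : ∀ (lam : Ω) (f : E), V lam (T f) = Tl lam (V lam f)) :
    ‖T‖ = ⨆ lam : Ω, sSup ((fun f : E => ‖Tl lam (V lam f)‖) '' {f : E | ‖V lam f‖ ≤ 1}) := by
  classical
  -- pointwise value of `ip g g` is the squared norm of `V lam g`
  have hVsq : ∀ (lam : Ω) (g : E), ip g g lam = ((‖V lam g‖ : ℂ)) ^ 2 := fun lam g => by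
    rw [← hV]; exact inner_self_eq_norm_sq_to_K _
  have hVnormsq : ∀ (lam : Ω) (g : E), ‖ip g g lam‖ = ‖V lam g‖ ^ 2 := fun lam g => by
    rw [hVsq, ← Complex.ofReal_pow, Complex.norm_real, Real.norm_eq_abs]
    exact abs_of_nonneg (by positivity)
  have hnormsq : ∀ g : E, ‖g‖ ^ 2 = ‖ip g g‖ := fun g => by
    rw [hnorm g, Real.sq_sqrt (norm_nonneg _)]
  have hVle : ∀ (lam : Ω) (g : E), ‖V lam g‖ ≤ ‖g‖ := by
    intro lam g
    have h1 : ‖V lam g‖ ^ 2 ≤ ‖g‖ ^ 2 := by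
      rw [hnormsq, ← hVnormsq lam g]
      exact ContinuousMap.norm_coe_le_norm _ _
    exact aux_le_of_sq_le_sq (norm_nonneg _) h1 (norm_nonneg _)
  have ippt_le : ∀ (lam : Ω) (g h : E), ‖ip g h lam‖ ≤ ‖V lam g‖ * ‖V lam h‖ := by
    intro lam g h
    rw [← hV]
    exact norm_inner_le_norm _ _
  have ipnorm_le : ∀ g h : E, ‖ip g h‖ ≤ ‖g‖ * ‖h‖ := by
    intro g h
    refine (ContinuousMap.norm_le _ (mul_nonneg (norm_nonneg g) (norm_nonneg h))).2 ?_
    intro lam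
    exact (ippt_le lam g h).trans
      (mul_le_mul (hVle _ _) (hVle _ _) (norm_nonneg _) (norm_nonneg _))
  -- flipped adjoint relation
  have h_adj' : ∀ g h : E, ip (T' g) h = ip g (T h) := by
    intro g h
    calc ip (T' g) h = star (ip h (T' g)) := h_star h (T' g)
      _ = star (ip (T h) g) := by rw [h_adj]
      _ = ip g (T h) := (h_star (T h) g).symm
  -- ‖T'‖ ≤ ‖T‖
  have hT' : ‖T'‖ ≤ ‖T‖ := by
    refine ContinuousLinearMap.opNorm_le_bound _ (norm_nonneg T) (fun g => ?_)
    rcases eq_or_ne (‖T' g‖) 0 with h0 | h0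
    · rw [h0]; positivity
    · have hpos : 0 < ‖T' g‖ := (norm_nonneg _).lt_of_ne' h0
      have hsq : ‖T' g‖ ^ 2 ≤ (‖T‖ * ‖g‖) * ‖T' g‖ := by
        rw [hnormsq, h_adj' g (T' g)]
        calc ‖ip g (T (T' g))‖ ≤ ‖g‖ * ‖T (T' g)‖ := ipnorm_le _ _
          _ ≤ ‖g‖ * (‖T‖ * ‖T' g‖) := by
              exact mul_le_mul_of_nonneg_left (T.le_opNorm _) (norm_nonneg _)
          _ = (‖T‖ * ‖g‖) * ‖T' g‖ := by ring
      nlinarith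
  set A : E →L[ℂ] E := T'.comp T with hA
  have hAnorm : ‖A‖ ≤ ‖T‖ * ‖T‖ :=
    le_trans (ContinuousLinearMap.opNorm_comp_le _ _)
      (mul_le_mul_of_nonneg_right hT' (norm_nonneg T))
  have hA_apply : ∀ g : E, A g = T' (T g) := fun g => rfl
  have hA_selfadj : ∀ g h : E, ip (A g) h = ip g (A h) := by
    intro g h
    rw [hA_apply, hA_apply]
    calc ip (T' (T g)) h = ip (T g) (T h) := h_adj' _ _
      _ = ip g (T' (T h)) := h_adj _ _
  have hA_move : ∀ (n : ℕ) (g h : E), ip ((A ^ n) g) h = ip g ((A ^ n) h) := by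
    intro n
    induction n with
    | zero => intro g h; simp
    | succ n ih =>
      intro g h
      have e1 : (A ^ (n + 1)) g = (A ^ n) (A g) := by
        rw [pow_succ]; rfl
      have e2 : (A ^ (n + 1)) h = A ((A ^ n) h) := by
        rw [pow_succ']; rfl
      rw [e1, ih (A g) h, hA_selfadj, ← e2]
  have hApow : ∀ (n : ℕ) (g : E), ‖(A ^ n) g‖ ≤ ‖A‖ ^ n * ‖g‖ := by
    intro n
    induction n with
    | zero => intro g; simp
    | succ n ih =>
      intro g
      have e2 : (A ^ (n + 1)) g = A ((A ^ n) g) := by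
        rw [pow_succ']; rfl
      rw [e2]
      calc ‖A ((A ^ n) g)‖ ≤ ‖A‖ * ‖(A ^ n) g‖ := A.le_opNorm _
        _ ≤ ‖A‖ * (‖A‖ ^ n * ‖g‖) :=
            mul_le_mul_of_nonneg_left (ih g) (norm_nonneg _)
        _ = ‖A‖ ^ (n + 1) * ‖g‖ := by ring
  -- the hard bound : on the unit ball of the range of V, Tl is bounded by ‖T‖
  have hard : ∀ (lam : Ω) (f : E), ‖V lam f‖ ≤ 1 → ‖Tl lam (V lam f)‖ ≤ ‖T‖ := by
    intro lam f hf1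
    set x : ℕ → ℝ := fun n => (ip f ((A ^ n) f) lam).re with hxdef
    have hx2 : ∀ n : ℕ, x (2 * n) = ‖V lam ((A ^ n) f)‖ ^ 2 := by
      intro n
      have e : (A ^ (2 * n)) f = (A ^ n) ((A ^ n) f) := by
        rw [two_mul, pow_add]; rfl
      have e' : ip f ((A ^ (2 * n)) f) = ip ((A ^ n) f) ((A ^ n) f) := by
        rw [e, ← hA_move]
      show (ip f ((A ^ (2 * n)) f) lam).re = _
      rw [e', hVsq, ← Complex.ofReal_pow, Complex.ofReal_re]
    have hx1 : x 1 = ‖Tl lam (V lam f)‖ ^ 2 := by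
      have e : (A ^ 1) f = T' (T f) := by rw [pow_one]; rfl
      have e' : ip f ((A ^ 1) f) = ip (T f) (T f) := by
        rw [e, ← h_adj]
      show (ip f ((A ^ 1) f) lam).re = _
      rw [e', hVsq, hTl, ← Complex.ofReal_pow, Complex.ofReal_re]
    have hx1nn : 0 ≤ x 1 := hx1 ▸ sq_nonneg _
    have hxpow_nn : ∀ k : ℕ, 0 ≤ x (2 ^ k) := by
      intro k
      cases k with
      | zero => simpa using hx1nn
      | succ k =>
        rw [pow_succ' 2 k, hx2]
        positivity
    have hstep : ∀ n : ℕ, x n ≤ ‖V lam ((A ^ n) f)‖ := by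
      intro n
      have e : x n = (inner ℂ (V lam f) (V lam ((A ^ n) f)) : ℂ).re := by
        show (ip f ((A ^ n) f) lam).re = _
        rw [hV]
      rw [e]
      calc (inner ℂ (V lam f) (V lam ((A ^ n) f)) : ℂ).re
          ≤ ‖(inner ℂ (V lam f) (V lam ((A ^ n) f)) : ℂ)‖ := by
            exact Complex.re_le_norm _
        _ ≤ ‖V lam f‖ * ‖V lam ((A ^ n) f)‖ := norm_inner_le_norm _ _
        _ ≤ 1 * ‖V lam ((A ^ n) f)‖ :=
            mul_le_mul_of_nonneg_right hf1 (norm_nonneg _)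
        _ = ‖V lam ((A ^ n) f)‖ := one_mul _
    have hsq_step : ∀ k : ℕ, x (2 ^ k) ^ 2 ≤ x (2 ^ (k + 1)) := by
      intro k
      have h2 : x (2 ^ (k + 1)) = ‖V lam ((A ^ (2 ^ k)) f)‖ ^ 2 := by
        rw [pow_succ' 2 k]; exact hx2 _
      rw [h2]
      exact pow_le_pow_left₀ (hxpow_nn k) (hstep _) 2
    have hiter : ∀ k : ℕ, x 1 ^ (2 ^ k) ≤ x (2 ^ k) := by
      intro k
      induction k with
      | zero => simp
      | succ k ih =>
        calc x 1 ^ 2 ^ (k + 1) = (x 1 ^ 2 ^ k) ^ 2 := by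
              rw [← pow_mul, pow_succ]
          _ ≤ (x (2 ^ k)) ^ 2 := pow_le_pow_left₀ (pow_nonneg hx1nn _) ih 2
          _ ≤ x (2 ^ (k + 1)) := hsq_step k
    have hbound : ∀ k : ℕ, x 1 ^ (2 ^ k) ≤ (‖f‖ * ‖f‖) * ‖A‖ ^ (2 ^ k) := by
      intro k
      refine (hiter k).trans ?_
      have h1 : x (2 ^ k) ≤ ‖ip f ((A ^ (2 ^ k)) f) lam‖ := by
        show (ip f ((A ^ (2 ^ k)) f) lam).re ≤ _
        exact Complex.re_le_norm _
      refine h1.trans ?_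
      refine (ContinuousMap.norm_coe_le_norm _ lam).trans ?_
      calc ‖ip f ((A ^ (2 ^ k)) f)‖ ≤ ‖f‖ * ‖(A ^ (2 ^ k)) f‖ := ipnorm_le _ _
        _ ≤ ‖f‖ * (‖A‖ ^ (2 ^ k) * ‖f‖) :=
            mul_le_mul_of_nonneg_left (hApow _ _) (norm_nonneg _)
        _ = (‖f‖ * ‖f‖) * ‖A‖ ^ (2 ^ k) := by ring
    have hx1A : x 1 ≤ ‖A‖ := aux_le_of_pow_le hx1nn (norm_nonneg A) hbound
    have hfin : ‖Tl lam (V lam f)‖ ^ 2 ≤ ‖T‖ ^ 2 := by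
      rw [← hx1]
      refine hx1A.trans ?_
      rw [pow_two]
      exact hAnorm
    exact aux_le_of_sq_le_sq (norm_nonneg _) hfin (norm_nonneg _)
  -- assemble
  set S : Ω → Set ℝ :=
    fun lam => (fun f : E => ‖Tl lam (V lam f)‖) '' {f : E | ‖V lam f‖ ≤ 1} with hSdef
  have hSub : ∀ lam, ∀ a ∈ S lam, a ≤ ‖T‖ := by
    rintro lam a ⟨f, hf, rfl⟩
    exact hard lam f hf
  have hSbdd : ∀ lam, BddAbove (S lam) := fun lam => ⟨‖T‖, fun a ha => hSub lam a ha⟩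
  have hSnn : ∀ lam, 0 ≤ sSup (S lam) := by
    intro lam
    refine Real.sSup_nonneg ?_
    rintro a ⟨f, hf, rfl⟩
    exact norm_nonneg _
  have hRbdd : BddAbove (Set.range fun lam => sSup (S lam)) := by
    refine ⟨‖T‖, ?_⟩
    rintro r ⟨lam, rfl⟩
    exact Real.sSup_le (hSub lam) (norm_nonneg T)
  have hRnn : 0 ≤ ⨆ lam, sSup (S lam) := Real.iSup_nonneg hSnn
  have hle1 : (⨆ lam, sSup (S lam)) ≤ ‖T‖ :=
    Real.iSup_le (fun lam => Real.sSup_le (hSub lam) (norm_nonneg T)) (norm_nonneg T)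
  have hle2 : ‖T‖ ≤ ⨆ lam, sSup (S lam) := by
    refine ContinuousLinearMap.opNorm_le_bound _ hRnn (fun f => ?_)
    have key : ∀ lam : Ω, ‖V lam (T f)‖ ≤ (⨆ lam, sSup (S lam)) * ‖f‖ := by
      intro lam
      rcases eq_or_ne f 0 with rfl | hf0
      · simp
      · have hfpos : 0 < ‖f‖ := norm_pos_iff.2 hf0
        set c : ℂ := ((‖f‖⁻¹ : ℝ) : ℂ) with hc
        have hcnorm : ‖c‖ = ‖f‖⁻¹ := by
          rw [hc, Complex.norm_real, Real.norm_eq_abs, abs_of_nonneg (by positivity)]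
        have hmemset : c • f ∈ {g : E | ‖V lam g‖ ≤ 1} := by
          show ‖V lam (c • f)‖ ≤ 1
          rw [map_smul, norm_smul, hcnorm]
          calc ‖f‖⁻¹ * ‖V lam f‖ ≤ ‖f‖⁻¹ * ‖f‖ :=
              mul_le_mul_of_nonneg_left (hVle lam f) (by positivity)
            _ = 1 := inv_mul_cancel₀ hfpos.ne'
        have hmem : ‖Tl lam (V lam (c • f))‖ ∈ S lam := ⟨c • f, hmemset, rfl⟩
        have h1 : ‖Tl lam (V lam (c • f))‖ ≤ sSup (S lam) := le_csSup (hSbdd lam) hmem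
        have h2 : sSup (S lam) ≤ ⨆ lam, sSup (S lam) := le_ciSup hRbdd lam
        have h3 : ‖Tl lam (V lam (c • f))‖ = ‖f‖⁻¹ * ‖Tl lam (V lam f)‖ := by
          rw [map_smul, map_smul, norm_smul, hcnorm]
        have h4 : ‖f‖⁻¹ * ‖Tl lam (V lam f)‖ ≤ ⨆ lam, sSup (S lam) := by
          rw [← h3]; exact h1.trans h2
        rw [hTl]
        rw [inv_mul_le_iff₀ hfpos] at h4
        calc ‖Tl lam (V lam f)‖ ≤ ‖f‖ * (⨆ lam, sSup (S lam)) := h4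
          _ = (⨆ lam, sSup (S lam)) * ‖f‖ := mul_comm _ _
    have hnb : ‖ip (T f) (T f)‖ ≤ ((⨆ lam, sSup (S lam)) * ‖f‖) ^ 2 := by
      refine (ContinuousMap.norm_le _ (by positivity)).2 (fun lam => ?_)
      rw [hVnormsq]
      exact pow_le_pow_left₀ (norm_nonneg _) (key lam) 2
    calc ‖T f‖ = Real.sqrt ‖ip (T f) (T f)‖ := hnorm _
      _ ≤ Real.sqrt (((⨆ lam, sSup (S lam)) * ‖f‖) ^ 2) := Real.sqrt_le_sqrt hnb
      _ = (⨆ lam, sSup (S lam)) * ‖f‖ := Real.sqrt_sq (by positivity)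
  exact le_antisymm hle2 hle1
end
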